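/- Let p be an odd prime and let CM(G, X, q) be a p-valent regular anti-balanced Cayley map on a finite abelian group G. Then CM(G, X, q) is isomorphic to the Cayley map CM(ℤ/2p, X₂, q₂), where X₂ = {1, 3, 5, …, 2p−1} is the set of odd residues in ℤ/2p and q₂ is the permutation of X₂ given by q₂(x) = x + 2. -/

import Mathlib

/-- A Cayley map `CM(G, X, q)`: a finite subset `X` of `G` with `1 ∉ X`,
closed under inverses, generating `G`, together with a permutation `q` of `X`
acting on `X` as a single cycle of length `|X|`. -/
structure CayleyMapData (G : Type*) [Group G] where
  X : Finset G
  one_not_mem : (1 : G) ∉ X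
  inv_mem : ∀ x ∈ X, x⁻¹ ∈ X
  gen : Subgroup.closure (X : Set G) = ⊤
  q : Equiv.Perm {x : G // x ∈ X}
  single_cycle : ∀ x y : {x : G // x ∈ X}, ∃ k : ℕ, (q ^ k) x = y

namespace CayleyMapData

variable {G : Type*} [Group G] (M : CayleyMapData G)

/-- The rotation `R(g, x) = (g, q(x))` on the arc set `G × X`. -/
def rotation : Equiv.Perm (G × {x : G // x ∈ M.X}) :=
  (Equiv.refl G).prodCongr M.q

/-- The arc-reversing involution `L(g, x) = (g·x, x⁻¹)` on the arc set `G × X`. -/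
def invol : Equiv.Perm (G × {x : G // x ∈ M.X}) where
  toFun d := (d.1 * d.2.1, ⟨(d.2.1 : G)⁻¹, M.inv_mem _ d.2.2⟩)
  invFun d := (d.1 * d.2.1, ⟨(d.2.1 : G)⁻¹, M.inv_mem _ d.2.2⟩)
  left_inv := by rintro ⟨g, x, hx⟩; simp
  right_inv := by rintro ⟨g, x, hx⟩; simp

/-- The Cayley map is regular: the monodromy group `⟨R, L⟩` acts sharply
transitively on the arc set. -/
def IsRegular : Prop :=
  ∀ d d' : G × {x : G // x ∈ M.X},
    ∃! m : Subgroup.closure ({M.rotation, M.invol} :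
        Set (Equiv.Perm (G × {x : G // x ∈ M.X}))),
      (m : Equiv.Perm (G × {x : G // x ∈ M.X})) d = d'

/-- Balanced: `(q x)⁻¹ = q (x⁻¹)` for all `x ∈ X`. -/
def IsBalanced : Prop :=
  ∀ x : {x : G // x ∈ M.X},
    ((M.q x : G))⁻¹ = (M.q ⟨(x : G)⁻¹, M.inv_mem _ x.2⟩ : G)

/-- Anti-balanced: `(q x)⁻¹ = q⁻¹ (x⁻¹)` for all `x ∈ X`. -/
def IsAntiBalanced : Prop :=
  ∀ x : {x : G // x ∈ M.X},
    ((M.q x : G))⁻¹ = (M.q⁻¹ ⟨(x : G)⁻¹, M.inv_mem _ x.2⟩ : G)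

end CayleyMapData


/-- A `p`-valent regular anti-balanced Cayley map on a finite abelian group
(`p` an odd prime) is isomorphic to `CM(ℤ/2p, {1,3,…,2p-1}, x ↦ x+2)`
(the cyclic group `ℤ/2p` written multiplicatively): there is a bijection of
arc sets commuting with the rotations and with the arc-reversing involutions. -/
theorem prime_valent_regular_antibalanced_cayley_map_abelian
    {G : Type*} [CommGroup G] [Fintype G] (p : ℕ) [hp : Fact p.Prime] (hodd : Odd p)
    (M : CayleyMapData G) (hval : M.X.card = p) (hreg : M.IsRegular)
    (hanti : M.IsAntiBalanced) :
    ∃ (M₂ : CayleyMapData (Multiplicative (ZMod (2 * p))))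
      (e : (G × {x : G // x ∈ M.X}) ≃
        (Multiplicative (ZMod (2 * p)) ×
          {x : Multiplicative (ZMod (2 * p)) // x ∈ M₂.X})),
      M₂.X = Finset.univ.filter
        (fun x : Multiplicative (ZMod (2 * p)) => Odd (Multiplicative.toAdd x).val) ∧
      (∀ x : {x : Multiplicative (ZMod (2 * p)) // x ∈ M₂.X},
        Multiplicative.toAdd ((M₂.q x : Multiplicative (ZMod (2 * p)))) =
          Multiplicative.toAdd (x : Multiplicative (ZMod (2 * p))) + 2) ∧
      (∀ d, e (M.rotation d) = M₂.rotation (e d)) ∧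
      (∀ d, e (M.invol d) = M₂.invol (e d)) := by
  classical
  have hpp := hp.out
  have hp2 : 2 ≤ p := hpp.two_le
  have hp1 : p % 2 = 1 := Nat.odd_iff.mp hodd
  have hppos : 0 < p := by omega
  haveI : NeZero (2 * p) := ⟨by omega⟩
  haveI : Fact (1 < 2 * p) := ⟨by omega⟩
  -- basic cardinality
  have hcard : Fintype.card {x : G // x ∈ M.X} = p := by
    rw [Fintype.card_coe, hval]
  have hSne : Nonempty {x : G // x ∈ M.X} := by
    rw [← Fintype.card_pos_iff, hcard]; exact hppos
  -- no nontrivial power of q has a fixed point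
  have hfree : ∀ (k : ℕ) (x : {x : G // x ∈ M.X}), (M.q ^ k) x = x → M.q ^ k = 1 := by
    intro k x hx
    ext y
    rw [Equiv.Perm.one_apply]
    obtain ⟨j, hj⟩ := M.single_cycle x y
    rw [← hj, ← Equiv.Perm.mul_apply, ← pow_add, Nat.add_comm, pow_add,
      Equiv.Perm.mul_apply, hx]
  -- the order of q is p
  have hqord : orderOf M.q = p := by
    obtain ⟨z⟩ := hSne
    have hpos : 0 < orderOf M.q := orderOf_pos M.q
    have hbij : Function.Bijective (fun k : Fin (orderOf M.q) => (M.q ^ (k : ℕ)) z) := by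
      constructor
      · have key : ∀ i j : Fin (orderOf M.q), i ≤ j →
            (M.q ^ (i : ℕ)) z = (M.q ^ (j : ℕ)) z → i = j := by
          intro i j hij h
          have hij' : (i : ℕ) ≤ (j : ℕ) := hij
          have h2 : (M.q ^ ((j : ℕ) - (i : ℕ))) ((M.q ^ (i : ℕ)) z) = (M.q ^ (i : ℕ)) z := by
            rw [← Equiv.Perm.mul_apply, ← pow_add, Nat.sub_add_cancel hij']
            exact h.symm
          have h4 : orderOf M.q ∣ (j : ℕ) - (i : ℕ) :=
            orderOf_dvd_of_pow_eq_one (hfree _ _ h2)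
          have h5 : (j : ℕ) - (i : ℕ) = 0 :=
            Nat.eq_zero_of_dvd_of_lt h4 (by omega)
          exact Fin.ext (by omega)
        intro i j h
        rcases le_total i j with hij | hij
        · exact key i j hij h
        · exact (key j i hij h.symm).symm
      · intro y
        obtain ⟨k, hk⟩ := M.single_cycle z y
        refine ⟨⟨k % orderOf M.q, Nat.mod_lt _ hpos⟩, ?_⟩
        show (M.q ^ (k % orderOf M.q)) z = y
        rw [pow_mod_orderOf]; exact hk
    have hc := Fintype.card_of_bijective hbij
    rw [Fintype.card_fin, hcard] at hc
    exact hc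
  have hqp : M.q ^ p = 1 := by rw [← hqord]; exact pow_orderOf_eq_one _
  have hqmul : M.q * M.q ^ (p - 1) = 1 := by
    rw [← pow_succ', Nat.sub_add_cancel (by omega)]
    exact hqp
  have hqpm1 : ∀ x : {x : G // x ∈ M.X}, M.q ((M.q ^ (p - 1)) x) = x := by
    intro x
    calc M.q ((M.q ^ (p - 1)) x) = (M.q * M.q ^ (p - 1)) x := (Equiv.Perm.mul_apply _ _ _).symm
    _ = x := by rw [hqmul]; rfl
  have hqpm1' : ∀ x : {x : G // x ∈ M.X}, (M.q ^ (p - 1)) (M.q x) = x := by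
    intro x
    calc (M.q ^ (p - 1)) (M.q x) = (M.q ^ (p - 1) * M.q) x := (Equiv.Perm.mul_apply _ _ _).symm
    _ = x := by rw [← pow_succ, Nat.sub_add_cancel (by omega), hqp]; rfl
  -- an involution x₀ in X
  have hx0ex : ∃ x ∈ M.X, x⁻¹ = x := by
    by_contra hcon
    push_neg at hcon
    have hsum : ∑ _x ∈ M.X, (1 : ZMod 2) = 0 := by
      refine Finset.sum_involution (fun a _ => a⁻¹) (fun a ha => by decide)
        (fun a ha _ => hcon a ha) (fun a ha => M.inv_mem a ha) (fun a ha => inv_inv a)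
    rw [Finset.sum_const, hval, nsmul_eq_mul, mul_one] at hsum
    have := (ZMod.natCast_eq_zero_iff p 2).mp hsum
    omega
  obtain ⟨x0v, hx0mem, hx0inv⟩ := hx0ex
  set x₀ : {x : G // x ∈ M.X} := ⟨x0v, hx0mem⟩ with hx₀def
  have h₀ : ((x₀ : G))⁻¹ = (x₀ : G) := hx0inv
  have hsq : (x₀ : G) * (x₀ : G) = 1 := by
    nth_rewrite 1 [← h₀]
    exact inv_mul_cancel _
  -- the inversion map ι on X
  set ι : {x : G // x ∈ M.X} → {x : G // x ∈ M.X} :=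
    fun x => ⟨(x : G)⁻¹, M.inv_mem _ x.2⟩ with hιdef
  have hι : ∀ x, ι (M.q x) = M.q⁻¹ (ι x) := fun x => Subtype.ext (hanti x)
  have hιq : ∀ x, M.q (ι (M.q x)) = ι x := by
    intro x; rw [hι]; exact Equiv.apply_symm_apply _ _
  have hιι : ∀ x, ι (ι x) = x := fun x => Subtype.ext (inv_inv _)
  have hιx₀ : ι x₀ = x₀ := Subtype.ext h₀
  have hιpow : ∀ (k : ℕ) (x), ι ((M.q ^ k) x) = (M.q⁻¹ ^ k) (ι x) := by
    intro k
    induction k with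
    | zero => intro x; simp
    | succ n ih =>
      intro x
      have h1 : (M.q ^ (n + 1)) x = M.q ((M.q ^ n) x) := by
        rw [pow_succ', Equiv.Perm.mul_apply]
      have h2 : (M.q⁻¹ ^ (n + 1)) (ι x) = M.q⁻¹ ((M.q⁻¹ ^ n) (ι x)) := by
        rw [pow_succ', Equiv.Perm.mul_apply]
      rw [h1, h2, hι, ih]
  have hinvpow : M.q⁻¹ ^ (p - 1) = M.q := by
    rw [inv_pow]
    exact (eq_inv_of_mul_eq_one_left hqmul).symm
  have hkey : (((M.q ^ (p - 1)) x₀ : {x : G // x ∈ M.X}) : G)⁻¹ = (M.q x₀ : G) := by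
    have h1 : ι ((M.q ^ (p - 1)) x₀) = M.q x₀ := by
      rw [hιpow, hιx₀, hinvpow]
    exact congrArg Subtype.val h1
  -- monodromy computations
  have hRapp : ∀ (g : G) (x), M.rotation (g, x) = (g, M.q x) := fun g x => rfl
  have hLapp : ∀ (g : G) (x), M.invol (g, x) = (g * (x : G), ι x) := fun g x => rfl
  have hRpow : ∀ (k : ℕ) (g : G) (x), (M.rotation ^ k) (g, x) = (g, (M.q ^ k) x) := by
    intro k
    induction k with
    | zero => intro g x; rfl
    | succ n ih =>
      intro g x
      rw [pow_succ, Equiv.Perm.mul_apply, hRapp, ih]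
      have : (M.q ^ n) (M.q x) = (M.q ^ (n + 1)) x := by
        rw [pow_succ, Equiv.Perm.mul_apply]
      rw [this]
  have hTapp : ∀ (g : G) (x),
      (M.invol * M.rotation * M.invol * M.rotation) (g, x)
        = (g * ((M.q x : G) * (x : G)⁻¹), x) := by
    intro g x
    simp only [Equiv.Perm.mul_apply]
    rw [hRapp, hLapp, hRapp, hLapp, hιq, hιι]
    show (g * (M.q x : G) * ((ι x : {x : G // x ∈ M.X}) : G), x) = _
    show (g * (M.q x : G) * (x : G)⁻¹, x) = _
    rw [mul_assoc]
  have hTinv : ∀ (g : G) (x),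
      (M.invol * M.rotation * M.invol * M.rotation)⁻¹ (g, x)
        = (g * ((M.q x : G) * (x : G)⁻¹)⁻¹, x) := by
    intro g x
    have h2 : (M.invol * M.rotation * M.invol * M.rotation)
        (g * ((M.q x : G) * (x : G)⁻¹)⁻¹, x) = (g, x) := by
      rw [hTapp, inv_mul_cancel_right]
    rw [← h2]; exact Equiv.symm_apply_apply _ _
  have hRmem : M.rotation ∈ Subgroup.closure
      ({M.rotation, M.invol} : Set (Equiv.Perm (G × {x : G // x ∈ M.X}))) :=
    Subgroup.subset_closure (Set.mem_insert _ _)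
  have hLmem : M.invol ∈ Subgroup.closure
      ({M.rotation, M.invol} : Set (Equiv.Perm (G × {x : G // x ∈ M.X}))) :=
    Subgroup.subset_closure (Set.mem_insert_of_mem _ rfl)
  have hTmem : (M.invol * M.rotation * M.invol * M.rotation) ∈ Subgroup.closure
      ({M.rotation, M.invol} : Set (Equiv.Perm (G × {x : G // x ∈ M.X}))) :=
    mul_mem (mul_mem (mul_mem hLmem hRmem) hLmem) hRmem
  -- rigidity from regularity
  have hrigid : ∀ m : Equiv.Perm (G × {x : G // x ∈ M.X}),
      m ∈ Subgroup.closure ({M.rotation, M.invol} :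
        Set (Equiv.Perm (G × {x : G // x ∈ M.X}))) →
      m ((1 : G), x₀) = ((1 : G), x₀) → m = 1 := by
    intro m hm hfixm
    obtain ⟨u, hu, huniq⟩ := hreg ((1 : G), x₀) ((1 : G), x₀)
    have h1 := huniq ⟨m, hm⟩ hfixm
    have h2 := huniq ⟨1, one_mem _⟩ rfl
    have h3 : (⟨m, hm⟩ : Subgroup.closure ({M.rotation, M.invol} :
        Set (Equiv.Perm (G × {x : G // x ∈ M.X})))) = ⟨1, one_mem _⟩ := h1.trans h2.symm
    exact congrArg Subtype.val h3
  -- the crucial element of the monodromy group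
  have hmmapp : ∀ (g : G) (x),
      (M.rotation * (M.invol * M.rotation * M.invol * M.rotation) * M.rotation ^ (p - 1)
        * (M.invol * M.rotation * M.invol * M.rotation)⁻¹) (g, x)
      = (g * ((M.q x : G) * (x : G)⁻¹)⁻¹
          * ((M.q ((M.q ^ (p - 1)) x) : G) * (((M.q ^ (p - 1)) x : {x : G // x ∈ M.X}) : G)⁻¹),
          x) := by
    intro g x
    rw [Equiv.Perm.mul_apply, hTinv, Equiv.Perm.mul_apply, hRpow, Equiv.Perm.mul_apply,
      hTapp, hRapp, hqpm1]
  have hδfix : ∀ x : {x : G // x ∈ M.X},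
      (M.q ((M.q ^ (p - 1)) x) : G) * (((M.q ^ (p - 1)) x : {x : G // x ∈ M.X}) : G)⁻¹
        = (M.q x : G) * (x : G)⁻¹ := by
    have hmem : (M.rotation * (M.invol * M.rotation * M.invol * M.rotation)
        * M.rotation ^ (p - 1) * (M.invol * M.rotation * M.invol * M.rotation)⁻¹)
        ∈ Subgroup.closure ({M.rotation, M.invol} :
          Set (Equiv.Perm (G × {x : G // x ∈ M.X}))) :=
      mul_mem (mul_mem (mul_mem hRmem hTmem) (pow_mem hRmem _)) (inv_mem hTmem)
    have hfix1 : (M.rotation * (M.invol * M.rotation * M.invol * M.rotation)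
        * M.rotation ^ (p - 1) * (M.invol * M.rotation * M.invol * M.rotation)⁻¹)
        ((1 : G), x₀) = ((1 : G), x₀) := by
      rw [hmmapp, hqpm1, hkey, h₀]
      have : (1 : G) * ((M.q x₀ : G) * (x₀ : G))⁻¹ * ((x₀ : G) * (M.q x₀ : G)) = 1 := by
        rw [one_mul, mul_comm ((M.q x₀ : G)) ((x₀ : G)), inv_mul_cancel]
      rw [this]
    have hone := hrigid _ hmem hfix1
    intro x
    have := congrArg (fun f : Equiv.Perm (G × {x : G // x ∈ M.X}) => f ((1 : G), x)) hone
    simp only [Equiv.Perm.one_apply] at this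
    rw [hmmapp] at this
    have h6 := congrArg Prod.fst this
    simp only at h6
    -- h6 : 1 * δ x ⁻¹ * δ (q^(p-1) x) = 1
    rw [one_mul] at h6
    have h7 := mul_eq_one_iff_eq_inv.mp h6
    exact (inv_inj.mp h7).symm
  -- δ is q-invariant, hence constant
  have hδstep : ∀ x : {x : G // x ∈ M.X},
      (M.q (M.q x) : G) * ((M.q x : {x : G // x ∈ M.X}) : G)⁻¹
        = (M.q x : G) * (x : G)⁻¹ := by
    intro x
    have h1 := hδfix (M.q x)
    rw [hqpm1'] at h1
    exact h1.symm
  have hδconst : ∀ x : {x : G // x ∈ M.X},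
      (M.q x : G) * (x : G)⁻¹ = (M.q x₀ : G) * ((x₀ : G))⁻¹ := by
    intro x
    obtain ⟨k, hk⟩ := M.single_cycle x₀ x
    rw [← hk]
    clear hk
    induction k with
    | zero => simp
    | succ n ih =>
      have h1 : (M.q ^ (n + 1)) x₀ = M.q ((M.q ^ n) x₀) := by
        rw [pow_succ', Equiv.Perm.mul_apply]
      rw [h1, hδstep ((M.q ^ n) x₀)]
      exact ih
  set d : G := (M.q x₀ : G) * ((x₀ : G))⁻¹ with hd
  have hqd : ∀ x : {x : G // x ∈ M.X}, (M.q x : G) = d * (x : G) := by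
    intro x
    rw [← hδconst x]
    exact (inv_mul_cancel_right _ _).symm
  have hqdk : ∀ (k : ℕ) (x : {x : G // x ∈ M.X}),
      (((M.q ^ k) x : {x : G // x ∈ M.X}) : G) = d ^ k * (x : G) := by
    intro k
    induction k with
    | zero => intro x; simp
    | succ n ih =>
      intro x
      have h1 : (M.q ^ (n + 1)) x = M.q ((M.q ^ n) x) := by
        rw [pow_succ', Equiv.Perm.mul_apply]
      rw [h1, hqd, ih, ← mul_assoc, ← pow_succ']
  have hdp : d ^ p = 1 := by
    have h1 := hqdk p x₀
    rw [hqp] at h1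
    have h2 : (x₀ : G) = d ^ p * (x₀ : G) := h1
    exact right_eq_mul.mp h2
  have hd1 : d ≠ 1 := by
    intro hd1
    haveI : Nontrivial {x : G // x ∈ M.X} :=
      Fintype.one_lt_card_iff_nontrivial.mp (by rw [hcard]; omega)
    obtain ⟨y, hy⟩ := exists_ne x₀
    obtain ⟨k, hk⟩ := M.single_cycle x₀ y
    have h1 := hqdk k x₀
    rw [hk, hd1, one_pow, one_mul] at h1
    exact hy (Subtype.ext h1)
  have horder : orderOf d = p := orderOf_eq_prime hdp hd1
  have hx0z : ∀ z : ℤ, (x₀ : G) ≠ d ^ z := by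
    intro z hz
    have h2 : d ^ (2 * z) = 1 := by
      rw [two_mul, zpow_add, ← hz]
      exact hsq
    have h3 : ((p : ℤ)) ∣ 2 * z := by
      rw [← horder]
      exact_mod_cast orderOf_dvd_iff_zpow_eq_one.mpr h2
    have hpZ : Prime (p : ℤ) := Nat.prime_iff_prime_int.mp hpp
    have h4 : (p : ℤ) ∣ z := by
      rcases (hpZ.dvd_mul.mp h3) with h | h
      · exfalso
        have : (p : ℤ) ∣ ((2 : ℕ) : ℤ) := by exact_mod_cast h
        have hp2' : p ∣ 2 := Int.ofNat_dvd.mp this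
        have := Nat.le_of_dvd (by norm_num) hp2'
        omega
      · exact h
    obtain ⟨z', hz'⟩ := h4
    rw [hz', zpow_mul] at hz
    rw [show ((p : ℤ)) = ((p : ℕ) : ℤ) from rfl, zpow_natCast, hdp, one_zpow] at hz
    exact M.one_not_mem (hz ▸ x₀.2)
  -- the generator w of G ≅ ℤ/2p
  obtain ⟨pp, hpp2⟩ := hodd
  set w : G := d ^ (pp + 1) * (x₀ : G) with hw
  have hw2 : w ^ 2 = d := by
    rw [hw, mul_pow, ← pow_mul]
    have h1 : (pp + 1) * 2 = p + 1 := by omega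
    rw [h1, pow_succ, hdp, one_mul, pow_two, hsq, mul_one]
  have hwp : w ^ p = (x₀ : G) := by
    rw [hw, mul_pow, ← pow_mul]
    have h1 : d ^ ((pp + 1) * p) = 1 := by rw [mul_comm, pow_mul, hdp, one_pow]
    rw [h1, one_mul]
    calc (x₀ : G) ^ p = ((x₀ : G) ^ 2) ^ pp * (x₀ : G) := by
          rw [← pow_mul, ← pow_succ]; congr 1
    _ = (x₀ : G) := by rw [pow_two, hsq, one_pow, one_mul]
  have hw2p : w ^ (2 * p) = 1 := by rw [pow_mul, hw2, hdp]
  have hwmod : ∀ n : ℕ, w ^ (n % (2 * p)) = w ^ n := by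
    intro n
    conv_rhs => rw [← Nat.mod_add_div n (2 * p)]
    rw [pow_add, pow_mul, hw2p, one_pow, mul_one]
  have hwodd : ∀ j : ℕ, w ^ (2 * j + 1) = d ^ (j + (pp + 1)) * (x₀ : G) := by
    intro j
    rw [pow_succ, pow_mul, hw2, hw, ← mul_assoc, ← pow_add]
  have hdX : ∀ m : ℕ, d ^ m * (x₀ : G) ∈ M.X := by
    intro m
    have h5 := hqdk m x₀
    have h6 := ((M.q ^ m) x₀).2
    rwa [h5] at h6
  -- the map ψ : ZMod (2p) → G
  have hadd : ∀ a b : ZMod (2 * p), w ^ (a + b).val = w ^ a.val * w ^ b.val := by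
    intro a b
    rw [ZMod.val_add, hwmod, pow_add]
  have hnat : ∀ n : ℕ, w ^ ((n : ZMod (2 * p))).val = w ^ n := by
    intro n
    rw [ZMod.val_natCast, hwmod]
  have hneg : ∀ a : ZMod (2 * p), w ^ (-a).val = (w ^ a.val)⁻¹ := by
    intro a
    have h1 := hadd (-a) a
    rw [neg_add_cancel, ZMod.val_zero, pow_zero] at h1
    exact eq_inv_of_mul_eq_one_left h1.symm
  have hker : ∀ t : ZMod (2 * p), w ^ t.val = 1 → t = 0 := by
    intro t ht
    have hlt : t.val < 2 * p := ZMod.val_lt t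
    rcases Nat.even_or_odd t.val with he | ho
    · obtain ⟨j, hj⟩ := he
      have hdj : d ^ j = 1 := by
        rw [← hw2, ← pow_mul, show 2 * j = j + j by omega, ← hj]
        exact ht
      have h7 : p ∣ j := by rw [← horder]; exact orderOf_dvd_of_pow_eq_one hdj
      have h8 : j = 0 := Nat.eq_zero_of_dvd_of_lt h7 (by omega)
      exact (ZMod.val_eq_zero t).mp (by omega)
    · exfalso
      obtain ⟨j, hj⟩ := ho
      have h9 : w ^ t.val = d ^ (j + (pp + 1)) * (x₀ : G) := by
        rw [hj]; exact hwodd j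
      rw [h9] at ht
      apply hx0z (-((j + (pp + 1) : ℕ) : ℤ))
      rw [zpow_neg, zpow_natCast]
      exact eq_inv_of_mul_eq_one_right ht
  have hinj : Function.Injective (fun t : ZMod (2 * p) => w ^ t.val) := by
    intro a b h
    simp only at h
    have h2 := hadd (a - b) b
    rw [sub_add_cancel] at h2
    rw [← h] at h2
    nth_rewrite 1 [← one_mul (w ^ a.val)] at h2
    have h3 := mul_right_cancel h2
    have h4 := hker _ h3.symm
    exact sub_eq_zero.mp h4
  have hsurj' : ∀ g : G, ∃ t : ZMod (2 * p), w ^ t.val = g := by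
    have hXr : ∀ g ∈ M.X, ∃ t : ZMod (2 * p), w ^ t.val = g := by
      intro g hg
      obtain ⟨kk, hkk⟩ := M.single_cycle x₀ ⟨g, hg⟩
      refine ⟨((p + 2 * kk : ℕ) : ZMod (2 * p)), ?_⟩
      rw [hnat, pow_add, hwp, pow_mul, hw2]
      have h5 := hqdk kk x₀
      rw [hkk] at h5
      rw [mul_comm]
      exact h5.symm
    intro g
    have hg : g ∈ Subgroup.closure ((M.X : Set G)) := by rw [M.gen]; trivial
    induction hg using Subgroup.closure_induction with
    | mem y hy => exact hXr y hy
    | one => exact ⟨0, by rw [ZMod.val_zero, pow_zero]⟩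

    | mul y z hy hz ihy ihz =>
      obtain ⟨ty, hty⟩ := ihy
      obtain ⟨tz, htz⟩ := ihz
      exact ⟨ty + tz, by rw [hadd, hty, htz]⟩
    | inv y hy ihy =>
      obtain ⟨ty, hty⟩ := ihy
      exact ⟨-ty, by rw [hneg, hty]⟩
  have hsurj : Function.Surjective (fun t : ZMod (2 * p) => w ^ t.val) :=
    fun g => (hsurj' g).imp (fun t ht => ht)
  -- parity facts in ZMod (2p)
  have hdvd2 : (2 : ℕ) ∣ 2 * p := ⟨p, rfl⟩
  have hpar : ∀ n : ℕ, ((n : ZMod (2 * p))).val % 2 = n % 2 := by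
    intro n; rw [ZMod.val_natCast]; exact Nat.mod_mod_of_dvd n hdvd2
  have hvadd : ∀ a b : ZMod (2 * p), (a + b).val % 2 = (a.val + b.val) % 2 := by
    intro a b; rw [ZMod.val_add]; exact Nat.mod_mod_of_dvd _ hdvd2
  have hvneg : ∀ a : ZMod (2 * p), a ≠ 0 → (-a).val = 2 * p - a.val := by
    intro a ha
    have hle : a.val < 2 * p := ZMod.val_lt a
    have hne : a.val ≠ 0 := fun h => ha ((ZMod.val_eq_zero a).mp h)
    have h1 : ((2 * p - a.val : ℕ) : ZMod (2 * p)) = -a := by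
      rw [Nat.cast_sub hle.le, ZMod.natCast_self, zero_sub]
      congr 1
      exact ZMod.natCast_rightInverse a
    rw [← h1, ZMod.val_natCast, Nat.mod_eq_of_lt (by omega)]
  have hval2 : ((2 : ZMod (2 * p))).val = 2 := by
    have h1 : ((2 : ℕ) : ZMod (2 * p)) = (2 : ZMod (2 * p)) := by norm_cast
    rw [← h1, ZMod.val_natCast, Nat.mod_eq_of_lt (by omega)]
  have h2ne : (2 : ZMod (2 * p)) ≠ 0 := by
    intro h
    have := (ZMod.val_eq_zero _).mpr h
    rw [hval2] at this
    omega
  -- the target Cayley map data on ZMod (2p)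
  have hmem₂ : ∀ x : Multiplicative (ZMod (2 * p)),
      x ∈ Finset.univ.filter
        (fun x : Multiplicative (ZMod (2 * p)) => Odd (Multiplicative.toAdd x).val)
      ↔ (Multiplicative.toAdd x).val % 2 = 1 := by
    intro x
    rw [Finset.mem_filter]
    simp [Nat.odd_iff]
  have hstep : ∀ x : Multiplicative (ZMod (2 * p)),
      x ∈ Finset.univ.filter
        (fun x : Multiplicative (ZMod (2 * p)) => Odd (Multiplicative.toAdd x).val) →
      x * Multiplicative.ofAdd (2 : ZMod (2 * p)) ∈ Finset.univ.filter
        (fun x : Multiplicative (ZMod (2 * p)) => Odd (Multiplicative.toAdd x).val) := by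
    intro x hx
    rw [hmem₂] at hx ⊢
    rw [toAdd_mul, toAdd_ofAdd, hvadd, hval2]
    omega
  have hstep' : ∀ x : Multiplicative (ZMod (2 * p)),
      x ∈ Finset.univ.filter
        (fun x : Multiplicative (ZMod (2 * p)) => Odd (Multiplicative.toAdd x).val) →
      x * (Multiplicative.ofAdd (2 : ZMod (2 * p)))⁻¹ ∈ Finset.univ.filter
        (fun x : Multiplicative (ZMod (2 * p)) => Odd (Multiplicative.toAdd x).val) := by
    intro x hx
    rw [hmem₂] at hx ⊢
    rw [toAdd_mul, toAdd_inv, toAdd_ofAdd, hvadd, hvneg _ h2ne, hval2]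
    omega
  let q₂ : Equiv.Perm {x : Multiplicative (ZMod (2 * p)) //
      x ∈ Finset.univ.filter
        (fun x : Multiplicative (ZMod (2 * p)) => Odd (Multiplicative.toAdd x).val)} :=
    { toFun := fun x => ⟨x.1 * Multiplicative.ofAdd (2 : ZMod (2 * p)), hstep x.1 x.2⟩
      invFun := fun x => ⟨x.1 * (Multiplicative.ofAdd (2 : ZMod (2 * p)))⁻¹, hstep' x.1 x.2⟩
      left_inv := fun x => Subtype.ext (mul_inv_cancel_right _ _)
      right_inv := fun x => Subtype.ext (inv_mul_cancel_right _ _) }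
  have hq₂pow : ∀ (k : ℕ) (x), ((q₂ ^ k) x).1
      = x.1 * (Multiplicative.ofAdd (2 : ZMod (2 * p))) ^ k := by
    intro k
    induction k with
    | zero => intro x; simp
    | succ n ih =>
      intro x
      have h1 : (q₂ ^ (n + 1)) x = (q₂ ^ n) (q₂ x) := by
        rw [pow_succ, Equiv.Perm.mul_apply]
      rw [h1, ih]
      show (q₂ x).1 * _ = _
      have h2 : (q₂ x).1 = x.1 * Multiplicative.ofAdd (2 : ZMod (2 * p)) := rfl
      rw [h2, pow_succ', ← mul_assoc]
  have hcyc : ∀ x y : {x : Multiplicative (ZMod (2 * p)) //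
      x ∈ Finset.univ.filter
        (fun x : Multiplicative (ZMod (2 * p)) => Odd (Multiplicative.toAdd x).val)},
      ∃ k : ℕ, (q₂ ^ k) x = y := by
    intro x y
    have hx' := (hmem₂ x.1).mp x.2
    have hy' := (hmem₂ y.1).mp y.2
    have hav : (Multiplicative.toAdd x.1).val < 2 * p := ZMod.val_lt _
    have hbv : (Multiplicative.toAdd y.1).val < 2 * p := ZMod.val_lt _
    refine ⟨(2 * p + (Multiplicative.toAdd y.1).val - (Multiplicative.toAdd x.1).val) / 2, ?_⟩
    apply Subtype.ext
    rw [hq₂pow]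
    have hcast : (((2 * p + (Multiplicative.toAdd y.1).val
          - (Multiplicative.toAdd x.1).val) : ℕ) : ZMod (2 * p))
        = Multiplicative.toAdd y.1 - Multiplicative.toAdd x.1 := by
      rw [Nat.cast_sub (by omega), Nat.cast_add, ZMod.natCast_self, zero_add,
        ZMod.natCast_rightInverse _, ZMod.natCast_rightInverse _]
    have hpw : (Multiplicative.ofAdd (2 : ZMod (2 * p)))
          ^ ((2 * p + (Multiplicative.toAdd y.1).val - (Multiplicative.toAdd x.1).val) / 2)
        = Multiplicative.ofAdd (Multiplicative.toAdd y.1 - Multiplicative.toAdd x.1) := by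
      rw [← ofAdd_nsmul]
      congr 1
      rw [nsmul_eq_mul, ← hcast]
      have h9 : ((((2 * p + (Multiplicative.toAdd y.1).val
            - (Multiplicative.toAdd x.1).val) / 2 : ℕ)) : ZMod (2 * p)) * 2
          = ((((2 * p + (Multiplicative.toAdd y.1).val
            - (Multiplicative.toAdd x.1).val) / 2 * 2 : ℕ)) : ZMod (2 * p)) := by
        push_cast
        ring
      rw [h9]
      congr 1
      omega
    rw [hpw]
    have hfin : Multiplicative.toAdd x.1
        + (Multiplicative.toAdd y.1 - Multiplicative.toAdd x.1)
        = Multiplicative.toAdd y.1 := by ring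
    calc x.1 * Multiplicative.ofAdd (Multiplicative.toAdd y.1 - Multiplicative.toAdd x.1)
        = Multiplicative.ofAdd (Multiplicative.toAdd x.1)
          * Multiplicative.ofAdd (Multiplicative.toAdd y.1 - Multiplicative.toAdd x.1) := by
          rw [ofAdd_toAdd]
      _ = y.1 := by rw [← ofAdd_add, hfin, ofAdd_toAdd]
  have hone₂ : (1 : Multiplicative (ZMod (2 * p))) ∉ Finset.univ.filter
      (fun x : Multiplicative (ZMod (2 * p)) => Odd (Multiplicative.toAdd x).val) := by
    intro hc
    rw [hmem₂, toAdd_one, ZMod.val_zero] at hc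
    omega
  have hinv₂ : ∀ x ∈ Finset.univ.filter
      (fun x : Multiplicative (ZMod (2 * p)) => Odd (Multiplicative.toAdd x).val),
      x⁻¹ ∈ Finset.univ.filter
      (fun x : Multiplicative (ZMod (2 * p)) => Odd (Multiplicative.toAdd x).val) := by
    intro x hx
    rw [hmem₂] at hx ⊢
    rw [toAdd_inv]
    have hne : Multiplicative.toAdd x ≠ 0 := by
      intro h0
      rw [h0, ZMod.val_zero] at hx
      omega
    rw [hvneg _ hne]
    have := ZMod.val_lt (Multiplicative.toAdd x)
    omega
  have hgen₂ : Subgroup.closure ((Finset.univ.filter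
      (fun x : Multiplicative (ZMod (2 * p)) => Odd (Multiplicative.toAdd x).val) : Finset _) :
        Set (Multiplicative (ZMod (2 * p)))) = ⊤ := by
    rw [eq_top_iff]
    intro h _
    have h1mem : Multiplicative.ofAdd (1 : ZMod (2 * p)) ∈ Finset.univ.filter
        (fun x : Multiplicative (ZMod (2 * p)) => Odd (Multiplicative.toAdd x).val) := by
      rw [hmem₂, toAdd_ofAdd, ZMod.val_one]
    have hh : h = (Multiplicative.ofAdd (1 : ZMod (2 * p))) ^ (Multiplicative.toAdd h).val := by
      rw [← ofAdd_nsmul, nsmul_eq_mul, mul_one,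
        ZMod.natCast_rightInverse (Multiplicative.toAdd h), ofAdd_toAdd]
    rw [hh]
    exact pow_mem (Subgroup.subset_closure h1mem) _
  -- the equivalence
  let E : ZMod (2 * p) ≃ G := Equiv.ofBijective _ ⟨hinj, hsurj⟩
  let E1 : Multiplicative (ZMod (2 * p)) ≃ G := (Multiplicative.toAdd).trans E
  have hE1 : ∀ h : Multiplicative (ZMod (2 * p)),
      E1 h = w ^ (Multiplicative.toAdd h).val := fun _ => rfl
  have hE1mul : ∀ a b, E1 (a * b) = E1 a * E1 b := by
    intro a b
    rw [hE1, hE1, hE1, toAdd_mul, hadd]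
  have hE1inv : ∀ a, E1 a⁻¹ = (E1 a)⁻¹ := by
    intro a
    rw [hE1, hE1, toAdd_inv, hneg]
  have hE1smul : ∀ a b : G, E1.symm (a * b) = E1.symm a * E1.symm b := by
    intro a b
    apply E1.injective
    rw [hE1mul, Equiv.apply_symm_apply, Equiv.apply_symm_apply, Equiv.apply_symm_apply]
  have hE1sinv : ∀ a : G, E1.symm a⁻¹ = (E1.symm a)⁻¹ := by
    intro a
    apply E1.injective
    rw [hE1inv, Equiv.apply_symm_apply, Equiv.apply_symm_apply]
  have hE1ofAdd2 : E1 (Multiplicative.ofAdd (2 : ZMod (2 * p))) = d := by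
    rw [hE1, toAdd_ofAdd, hval2, hw2]
  have hFX : ∀ y : Multiplicative (ZMod (2 * p)), y ∈ Finset.univ.filter
      (fun x : Multiplicative (ZMod (2 * p)) => Odd (Multiplicative.toAdd x).val) →
      E1 y ∈ M.X := by
    intro y hy
    rw [hmem₂] at hy
    rw [hE1]
    obtain ⟨j, hj⟩ : ∃ j, (Multiplicative.toAdd y).val = 2 * j + 1 :=
      ⟨(Multiplicative.toAdd y).val / 2, by omega⟩
    rw [hj, hwodd]
    exact hdX _
  have hXF : ∀ x : {x : G // x ∈ M.X}, E1.symm (x : G) ∈ Finset.univ.filter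
      (fun x : Multiplicative (ZMod (2 * p)) => Odd (Multiplicative.toAdd x).val) := by
    intro x
    obtain ⟨kk, hkk⟩ := M.single_cycle x₀ x
    have h5 := hqdk kk x₀
    rw [hkk] at h5
    have h6 : E1 (Multiplicative.ofAdd (((p + 2 * kk : ℕ) : ZMod (2 * p)))) = (x : G) := by
      rw [hE1, toAdd_ofAdd, hnat, pow_add, hwp, pow_mul, hw2, mul_comm]
      exact h5.symm
    have h7 : E1.symm (x : G) = Multiplicative.ofAdd (((p + 2 * kk : ℕ) : ZMod (2 * p))) := by
      rw [← h6, Equiv.symm_apply_apply]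
    rw [hmem₂, h7, toAdd_ofAdd, hpar]
    omega
  let eS : {x : G // x ∈ M.X} ≃ {x : Multiplicative (ZMod (2 * p)) //
      x ∈ Finset.univ.filter
        (fun x : Multiplicative (ZMod (2 * p)) => Odd (Multiplicative.toAdd x).val)} :=
    { toFun := fun x => ⟨E1.symm (x : G), hXF x⟩
      invFun := fun y => ⟨E1 y.1, hFX y.1 y.2⟩
      left_inv := fun x => Subtype.ext (E1.apply_symm_apply _)
      right_inv := fun y => Subtype.ext (E1.symm_apply_apply _) }
  refine ⟨⟨Finset.univ.filter
      (fun x : Multiplicative (ZMod (2 * p)) => Odd (Multiplicative.toAdd x).val),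
      hone₂, hinv₂, hgen₂, q₂, hcyc⟩,
    Equiv.prodCongr E1.symm eS, rfl, fun x => ?_, fun dd => ?_, fun dd => ?_⟩
  · show Multiplicative.toAdd (x.1 * Multiplicative.ofAdd (2 : ZMod (2 * p))) = _
    rw [toAdd_mul, toAdd_ofAdd]
  · obtain ⟨g, x⟩ := dd
    rw [hRapp]
    have hq2 : eS (M.q x) = q₂ (eS x) := by
      apply Subtype.ext
      show E1.symm ((M.q x : G)) = E1.symm (x : G) * Multiplicative.ofAdd (2 : ZMod (2 * p))
      apply E1.injective
      rw [Equiv.apply_symm_apply, hE1mul, Equiv.apply_symm_apply, hE1ofAdd2, hqd, mul_comm]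
    show (E1.symm g, eS (M.q x)) = (E1.symm g, q₂ (eS x))
    rw [hq2]
  · obtain ⟨g, x⟩ := dd
    rw [hLapp]
    apply Prod.ext
    · show E1.symm (g * (x : G)) = E1.symm g * E1.symm (x : G)
      exact hE1smul g _
    · apply Subtype.ext
      show E1.symm (((x : G))⁻¹) = (E1.symm (x : G))⁻¹
      exact hE1sinv _
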